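/- Let m, n ∈ ℕ with 2 ≤ m ≤ n. For every m⊗n state ρ, the negativity satisfies N(ρ) ≤ 1; equivalently, ‖ρ^Γ‖₁ ≤ 2m − 1. -/

import Mathlib

open Matrix BigOperators Polynomial
open scoped Kronecker ComplexOrder

noncomputable section

/-- Squared Hilbert–Schmidt norm `‖C‖² = Tr(CᴴC)`. -/
def hsNormSq {d : Type*} [Fintype d] (C : Matrix d d ℂ) : ℝ :=
  (Matrix.trace (Cᴴ * C)).re

/-- The matrix square root `Matrix.PosSemidef.sqrt` of the older Mathlib (removed since),
restored verbatim with its old definition. -/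
def Matrix.PosSemidef.sqrt {n 𝕜 : Type*} [Fintype n] [DecidableEq n] [RCLike 𝕜]
    {A : Matrix n n 𝕜} (hA : A.PosSemidef) : Matrix n n 𝕜 :=
  hA.1.eigenvectorUnitary.1 * diagonal ((↑) ∘ (√·) ∘ hA.1.eigenvalues) *
  (star hA.1.eigenvectorUnitary : Matrix n n 𝕜)

/-- Trace norm `‖X‖₁ = Tr √(XᴴX)`. -/
def traceNorm {d : Type*} [Fintype d] [DecidableEq d] (X : Matrix d d ℂ) : ℝ :=
  ((Matrix.posSemidef_conjTranspose_mul_self X).sqrt.trace).re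

/-- Partial transpose on the first factor: `ρ^Γ((i,k),(j,l)) = ρ((j,k),(i,l))`. -/
def ptranspose {m n : ℕ} (ρ : Matrix (Fin m × Fin n) (Fin m × Fin n) ℂ) :
    Matrix (Fin m × Fin n) (Fin m × Fin n) ℂ :=
  Matrix.of fun p q => ρ (q.1, p.2) (p.1, q.2)

/-- Negativity `N(ρ) = (‖ρ^Γ‖₁ - 1)/(m-1)`. -/
def negativity {m n : ℕ} (ρ : Matrix (Fin m × Fin n) (Fin m × Fin n) ℂ) : ℝ :=
  (traceNorm (ptranspose ρ) - 1) / ((m : ℝ) - 1)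

/-- `ψ` is an orthonormal basis of `ℂ^m` (an orthonormal family of `m` vectors). -/
def IsONB {m : ℕ} (ψ : Fin m → (Fin m → ℂ)) : Prop :=
  ∀ k l, (∑ i, star (ψ k i) * ψ l i) = if k = l then 1 else 0

/-- The rank-one projector `|v⟩⟨v|`. -/
def proj {m : ℕ} (v : Fin m → ℂ) : Matrix (Fin m) (Fin m) ℂ :=
  Matrix.vecMulVec v (fun j => star (v j))

/-- The von Neumann measurement map
`Π^A(ρ) = ∑ k, (|ψ_k⟩⟨ψ_k| ⊗ I_n) ρ (|ψ_k⟩⟨ψ_k| ⊗ I_n)`. -/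
def piA {m n : ℕ} (ψ : Fin m → (Fin m → ℂ))
    (ρ : Matrix (Fin m × Fin n) (Fin m × Fin n) ℂ) :
    Matrix (Fin m × Fin n) (Fin m × Fin n) ℂ :=
  ∑ k, (proj (ψ k) ⊗ₖ (1 : Matrix (Fin n) (Fin n) ℂ)) * ρ *
       (proj (ψ k) ⊗ₖ (1 : Matrix (Fin n) (Fin n) ℂ))

/-- Geometric discord
`D(ρ) = (m/(m-1)) · inf over von Neumann measurements of ‖ρ - Π^A(ρ)‖²`. -/
def gd {m n : ℕ} (ρ : Matrix (Fin m × Fin n) (Fin m × Fin n) ℂ) : ℝ :=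
  ((m : ℝ) / ((m : ℝ) - 1)) *
    ⨅ ψ : {ψ : Fin m → (Fin m → ℂ) // IsONB ψ}, hsNormSq (ρ - piA ψ.1 ρ)

/-- An `m ⊗ n` state: positive semidefinite with trace one. -/
def IsState {m n : ℕ} (ρ : Matrix (Fin m × Fin n) (Fin m × Fin n) ℂ) : Prop :=
  ρ.PosSemidef ∧ ρ.trace = 1

/-- Reindex a `6 × 6` matrix by `Fin 2 × Fin 3` with the ordering
`(1,1),(1,2),(1,3),(2,1),(2,2),(2,3)`. -/
def ofM6 (M : Matrix (Fin 6) (Fin 6) ℂ) :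
    Matrix (Fin 2 × Fin 3) (Fin 2 × Fin 3) ℂ :=
  Matrix.of fun p q =>
    M ⟨p.1.val * 3 + p.2.val, by have := p.1.isLt; have := p.2.isLt; omega⟩
      ⟨q.1.val * 3 + q.2.val, by have := q.1.isLt; have := q.2.isLt; omega⟩

/-- The family of states `ρ₁(a,b)`. -/
def rho1 (a b : ℝ) : Matrix (Fin 2 × Fin 3) (Fin 2 × Fin 3) ℂ :=
  ofM6 ((1 / (2 * ((a : ℂ)^2 + (b : ℂ)^2))) •
    !![(a:ℂ)^2, 0, 0, 0, (a:ℂ)*(b:ℂ), 0;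
       0, (b:ℂ)^2, 0, 0, 0, (a:ℂ)*(b:ℂ);
       0, 0, 0, 0, 0, 0;
       0, 0, 0, 0, 0, 0;
       (a:ℂ)*(b:ℂ), 0, 0, 0, (b:ℂ)^2, 0;
       0, (a:ℂ)*(b:ℂ), 0, 0, 0, (a:ℂ)^2])

open scoped MatrixOrder in
lemma psdSqrtEqAux {n : Type*} [Fintype n] [DecidableEq n] {A : Matrix n n ℂ}
    (hA : A.PosSemidef) : hA.sqrt = CFC.sqrt A := by
  rw [CFC.sqrt_eq_real_sqrt A hA.nonneg, cfcₙ_eq_cfc, hA.1.cfc_eq]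
  simp [Matrix.IsHermitian.cfc, Matrix.PosSemidef.sqrt, Unitary.conjStarAlgAut_apply, Function.comp_def]

open scoped MatrixOrder in
lemma psdSqrtMulSelfAux {n : Type*} [Fintype n] [DecidableEq n] {A : Matrix n n ℂ}
    (hA : A.PosSemidef) : hA.sqrt * hA.sqrt = A := by
  rw [psdSqrtEqAux]; exact CFC.sqrt_mul_sqrt_self A hA.nonneg

open scoped MatrixOrder in
lemma psdSqrtHermAux {n : Type*} [Fintype n] [DecidableEq n] {A : Matrix n n ℂ}
    (hA : A.PosSemidef) : (hA.sqrt)ᴴ = hA.sqrt := by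
  rw [psdSqrtEqAux]; exact (CFC.sqrt_nonneg A).posSemidef.1

open scoped MatrixOrder in
lemma psdEqSqrtAux {n : Type*} [Fintype n] [DecidableEq n] {A B : Matrix n n ℂ}
    (hB : B.PosSemidef) (hA : A.PosSemidef) (h : B ^ 2 = A) : B = hA.sqrt := by
  rw [psdSqrtEqAux]; exact (CFC.sqrt_unique (by rw [← sq]; exact h) hB.nonneg).symm

/-- Cauchy–Schwarz for complex vectors. -/
lemma csAux {ι : Type*} [Fintype ι] (u v : ι → ℂ) :
    ‖∑ i, u i * v i‖ ≤ Real.sqrt (∑ i, ‖u i‖ ^ 2) * Real.sqrt (∑ i, ‖v i‖ ^ 2) := by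
  calc ‖∑ i, u i * v i‖ ≤ ∑ i, ‖u i * v i‖ := norm_sum_le _ _
    _ = ∑ i, ‖u i‖ * ‖v i‖ := by simp [norm_mul]
    _ ≤ _ := Real.sum_mul_le_sqrt_mul_sqrt _ _ _

lemma sumNormSqAux {ι : Type*} [Fintype ι] (w : ι → ℂ) :
    ∑ p, ‖w p‖ ^ 2 = (star w ⬝ᵥ w).re := by
  rw [dotProduct, Complex.re_sum]
  refine Finset.sum_congr rfl fun p _ => ?_
  simp [Pi.star_apply, Complex.star_def, Complex.mul_re, Complex.sq_norm, Complex.normSq_apply]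

/-- An isometry preserves the ℓ² norm. -/
lemma isometryAux {ι : Type*} [Fintype ι] [DecidableEq ι] {S : Matrix ι ι ℂ} (hS : Sᴴ * S = 1) (v : ι → ℂ) :
    ∑ p, ‖(S *ᵥ v) p‖ ^ 2 = ∑ p, ‖v p‖ ^ 2 := by
  rw [sumNormSqAux, sumNormSqAux, star_mulVec, dotProduct_mulVec, vecMul_vecMul, hS, vecMul_one]

lemma sum4Aux {α β γ : Type*} [Fintype α] [Fintype β] [Fintype γ] (F : α → β → γ → ℂ) :
    ∑ i, ∑ k, ∑ j, F i k j = ∑ j, ∑ k, ∑ i, F i k j := by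
  calc ∑ i, ∑ k, ∑ j, F i k j
      = ∑ i, ∑ j, ∑ k, F i k j := Finset.sum_congr rfl fun i _ => Finset.sum_comm
    _ = ∑ j, ∑ i, ∑ k, F i k j := Finset.sum_comm
    _ = ∑ j, ∑ k, ∑ i, F i k j := Finset.sum_congr rfl fun j _ => Finset.sum_comm

/-- Key bound: the partial transpose of an isometry, as a quadratic form, is bounded by `m`. -/
lemma keyBoundAux {m n : ℕ} {S : Matrix (Fin m × Fin n) (Fin m × Fin n) ℂ}
    (hS : Sᴴ * S = 1) (x : Fin m × Fin n → ℂ) :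
    ‖∑ p, ∑ q, star (x p) * (ptranspose S p q * x q)‖ ≤ m * ∑ p, ‖x p‖ ^ 2 := by
  classical
  set A : Fin m → ℝ := fun i => ∑ k, ‖x (i, k)‖ ^ 2 with hA
  have hAnn : ∀ i, 0 ≤ A i := fun i => Finset.sum_nonneg fun k _ => sq_nonneg _
  set T : Fin m → Fin m → ℂ := fun i j =>
    ∑ k, ∑ l, star (x (i, k)) * (S (j, k) (i, l) * x (j, l)) with hT
  have hsum : ∑ p, ∑ q, star (x p) * (ptranspose S p q * x q) = ∑ i, ∑ j, T i j := by
    rw [Fintype.sum_prod_type]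
    refine Finset.sum_congr rfl fun i _ => ?_
    have : ∀ k : Fin n, ∑ q : Fin m × Fin n, star (x (i, k)) * (ptranspose S (i, k) q * x q)
        = ∑ j, ∑ l, star (x (i, k)) * (S (j, k) (i, l) * x (j, l)) := by
      intro k; rw [Fintype.sum_prod_type]; rfl
    calc ∑ k, ∑ q, star (x (i, k)) * (ptranspose S (i, k) q * x q)
        = ∑ k, ∑ j, ∑ l, star (x (i, k)) * (S (j, k) (i, l) * x (j, l)) :=
          Finset.sum_congr rfl fun k _ => this k
      _ = ∑ j, T i j := by simp only [hT]; exact Finset.sum_comm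
  have hTbound : ∀ i j, ‖T i j‖ ≤ Real.sqrt (A i) * Real.sqrt (A j) := by
    intro i j
    set xt : Fin m × Fin n → ℂ := fun p => if p.1 = j then x (i, p.2) else 0 with hxt
    set yt : Fin m × Fin n → ℂ := fun p => if p.1 = i then x (j, p.2) else 0 with hyt
    have h1 : T i j = ∑ p, star (xt p) * (S *ᵥ yt) p := by
      rw [Fintype.sum_prod_type]
      symm
      have hcol : ∀ a (k : Fin n), (S *ᵥ yt) (a, k) = ∑ l, S (a, k) (i, l) * x (j, l) := by
        intro a k
        simp only [mulVec, dotProduct, Fintype.sum_prod_type, hyt]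
        rw [Finset.sum_comm]
        simp [Finset.mul_sum, mul_ite, mul_zero]
      calc ∑ a, ∑ k, star (xt (a, k)) * (S *ᵥ yt) (a, k)
          = ∑ a, ∑ k, (if a = j then star (x (i, k)) else 0) *
              (∑ l, S (a, k) (i, l) * x (j, l)) := by
            refine Finset.sum_congr rfl fun a _ => Finset.sum_congr rfl fun k _ => ?_
            rw [hcol]
            simp [hxt, apply_ite star]
        _ = ∑ k, star (x (i, k)) * ∑ l, S (j, k) (i, l) * x (j, l) := by
            rw [Finset.sum_comm]
            refine Finset.sum_congr rfl fun k _ => ?_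
            simp [ite_mul, zero_mul]
        _ = T i j := by
            simp only [hT, Finset.mul_sum]
    have hxtnorm : ∑ p, ‖xt p‖ ^ 2 = A i := by
      rw [Fintype.sum_prod_type, Finset.sum_comm]
      simp [hxt, apply_ite (‖·‖), hA]
    have hytnorm : ∑ p, ‖yt p‖ ^ 2 = A j := by
      rw [Fintype.sum_prod_type, Finset.sum_comm]
      simp [hyt, apply_ite (‖·‖), hA]
    calc ‖T i j‖ = ‖∑ p, star (xt p) * (S *ᵥ yt) p‖ := by rw [h1]
      _ ≤ Real.sqrt (∑ p, ‖star (xt p)‖ ^ 2) * Real.sqrt (∑ p, ‖(S *ᵥ yt) p‖ ^ 2) :=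
          csAux _ _
      _ = Real.sqrt (A i) * Real.sqrt (A j) := by
          rw [isometryAux hS, hytnorm]
          congr 1
          rw [← hxtnorm]
          congr 1
          exact Finset.sum_congr rfl fun p _ => by rw [norm_star]
  have hcard : ((Finset.univ : Finset (Fin m)).card : ℝ) = m := by simp
  calc ‖∑ p, ∑ q, star (x p) * (ptranspose S p q * x q)‖
      = ‖∑ i, ∑ j, T i j‖ := by rw [hsum]
    _ ≤ ∑ i, ‖∑ j, T i j‖ := norm_sum_le _ _
    _ ≤ ∑ i, ∑ j, ‖T i j‖ := Finset.sum_le_sum fun i _ => norm_sum_le _ _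
    _ ≤ ∑ i, ∑ j, Real.sqrt (A i) * Real.sqrt (A j) :=
        Finset.sum_le_sum fun i _ => Finset.sum_le_sum fun j _ => hTbound i j
    _ = (∑ i, Real.sqrt (A i)) ^ 2 := by
        rw [sq, Finset.sum_mul_sum]
    _ ≤ (Finset.univ : Finset (Fin m)).card * ∑ i, Real.sqrt (A i) ^ 2 :=
        sq_sum_le_card_mul_sum_sq
    _ = m * ∑ p, ‖x p‖ ^ 2 := by
        rw [hcard, Fintype.sum_prod_type]
        congr 1
        exact Finset.sum_congr rfl fun i _ => Real.sq_sqrt (hAnn i)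

/-- Moving the partial transpose across the trace. -/
lemma tracePtAux {m n : ℕ} (S ρ : Matrix (Fin m × Fin n) (Fin m × Fin n) ℂ) :
    Matrix.trace (S * ptranspose ρ) = Matrix.trace (ptranspose S * ρ) := by
  simp only [Matrix.trace, Matrix.diag, Matrix.mul_apply, ptranspose, Matrix.of_apply,
    Fintype.sum_prod_type]
  calc ∑ i, ∑ k, ∑ j, ∑ l, S (i, k) (j, l) * ρ (i, l) (j, k)
      = ∑ j, ∑ k, ∑ i, ∑ l, S (i, k) (j, l) * ρ (i, l) (j, k) :=
        sum4Aux (fun i k j => ∑ l, S (i, k) (j, l) * ρ (i, l) (j, k))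
    _ = ∑ a, ∑ b, ∑ c, ∑ d, S (c, b) (a, d) * ρ (c, d) (a, b) := rfl

/-- For `ρ ⪰ 0`, `|Tr(Mρ)| ≤ m · Re Tr ρ` when `M`'s quadratic form is bounded by `m`. -/
lemma traceBoundAux {m n : ℕ} {ρ : Matrix (Fin m × Fin n) (Fin m × Fin n) ℂ}
    (hρ : ρ.PosSemidef) {M : Matrix (Fin m × Fin n) (Fin m × Fin n) ℂ}
    (hM : ∀ x : Fin m × Fin n → ℂ, ‖∑ p, ∑ q, star (x p) * (M p q * x q)‖ ≤ m * ∑ p, ‖x p‖ ^ 2) :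
    ‖Matrix.trace (M * ρ)‖ ≤ m * (Matrix.trace ρ).re := by
  classical
  set C := hρ.sqrt with hCdef
  have hC : C * C = ρ := psdSqrtMulSelfAux hρ
  have hCh : Cᴴ = C := psdSqrtHermAux hρ
  have hsym : ∀ a b, C a b = star (C b a) := by
    intro a b
    conv_lhs => rw [← hCh]
    rfl
  have key : Matrix.trace (M * ρ) =
      ∑ t, ∑ q, ∑ p, star (C q t) * (M q p * C p t) := by
    conv_lhs => rw [← hC, ← mul_assoc, Matrix.trace_mul_comm]
    simp only [Matrix.trace, Matrix.diag, Matrix.mul_apply, Finset.mul_sum]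
    refine Finset.sum_congr rfl fun t _ => Finset.sum_congr rfl fun q _ =>
      Finset.sum_congr rfl fun p _ => ?_
    rw [hsym t q]
  have htr : ∑ t, ∑ p, ‖C p t‖ ^ 2 = (Matrix.trace ρ).re := by
    rw [← hC]
    simp only [Matrix.trace, Matrix.diag, Matrix.mul_apply, Complex.re_sum]
    rw [Finset.sum_comm]
    refine Finset.sum_congr rfl fun t _ => Finset.sum_congr rfl fun p _ => ?_
    rw [hsym t p]
    simp [Complex.star_def, Complex.mul_re, Complex.sq_norm, Complex.normSq_apply]
  calc ‖Matrix.trace (M * ρ)‖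
      = ‖∑ t, ∑ q, ∑ p, star (C q t) * (M q p * C p t)‖ := by rw [key]
    _ ≤ ∑ t, ‖∑ q, ∑ p, star (C q t) * (M q p * C p t)‖ := norm_sum_le _ _
    _ ≤ ∑ t, (m : ℝ) * ∑ p, ‖C p t‖ ^ 2 :=
        Finset.sum_le_sum fun t _ => hM (fun p => C p t)
    _ = m * ∑ t, ∑ p, ‖C p t‖ ^ 2 := by rw [Finset.mul_sum]
    _ = m * (Matrix.trace ρ).re := by rw [htr]

/-- The trace norm of a Hermitian matrix is realized by pairing with a unitary sign matrix. -/
lemma traceNormRepAux {ι : Type*} [Fintype ι] [DecidableEq ι] (X : Matrix ι ι ℂ)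
    (hX : X.IsHermitian) :
    ∃ S : Matrix ι ι ℂ, Sᴴ * S = 1 ∧ traceNorm X = (Matrix.trace (S * X)).re := by
  classical
  set U : Matrix ι ι ℂ := (hX.eigenvectorUnitary : Matrix ι ι ℂ) with hUdef
  have hmem := hX.eigenvectorUnitary.2
  rw [Unitary.mem_iff] at hmem
  have hU1 : Uᴴ * U = 1 := by rw [← Matrix.star_eq_conjTranspose]; exact hmem.1
  have hU2 : U * Uᴴ = 1 := by rw [← Matrix.star_eq_conjTranspose]; exact hmem.2
  set lam := hX.eigenvalues with hlam
  set s : ι → ℂ := fun i => if 0 ≤ lam i then 1 else -1 with hs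
  set S : Matrix ι ι ℂ := U * Matrix.diagonal s * Uᴴ with hSdef
  set Mabs : Matrix ι ι ℂ :=
    U * Matrix.diagonal (fun i => ((|lam i| : ℝ) : ℂ)) * Uᴴ with hMdef
  have hmuldiag : ∀ a b : ι → ℂ,
      U * Matrix.diagonal a * Uᴴ * (U * Matrix.diagonal b * Uᴴ)
        = U * Matrix.diagonal (a * b) * Uᴴ := by
    intro a b
    have hUa : ∀ Y : Matrix ι ι ℂ, Uᴴ * (U * Y) = Y := fun Y => by
      rw [← Matrix.mul_assoc, hU1, Matrix.one_mul]
    simp only [Matrix.mul_assoc]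
    rw [hUa, ← Matrix.mul_assoc (Matrix.diagonal a), Matrix.diagonal_mul_diagonal]
    rfl
  have hspec : X = U * Matrix.diagonal (fun i => ((lam i : ℝ) : ℂ)) * Uᴴ := by
    conv_lhs => rw [hX.spectral_theorem]
    rfl
  have hsstar : star s = s := by
    funext i
    by_cases h : 0 ≤ lam i <;> simp [hs, h]
  have hss : s * s = 1 := by
    funext i
    by_cases h : 0 ≤ lam i <;> simp [hs, h]
  have hSh : Sᴴ = S := by
    rw [hSdef]
    simp only [Matrix.conjTranspose_mul, Matrix.conjTranspose_conjTranspose,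
      Matrix.diagonal_conjTranspose, hsstar, Matrix.mul_assoc]
  have hSS : Sᴴ * S = 1 := by
    rw [hSh, hSdef, hmuldiag, hss, Pi.one_def, Matrix.diagonal_one, Matrix.mul_one, hU2]
  have hMpsd : Mabs.PosSemidef := by
    rw [hMdef]
    refine Matrix.PosSemidef.mul_mul_conjTranspose_same ?_ U
    refine Matrix.posSemidef_diagonal_iff.mpr fun i => ?_
    rw [Complex.zero_le_real]
    exact abs_nonneg _
  have hMsq : Mabs ^ 2 = Xᴴ * X := by
    rw [sq, hX.eq, hspec, hMdef, hmuldiag, hmuldiag]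
    refine congrArg (fun v => U * Matrix.diagonal v * Uᴴ) (funext fun i => ?_)
    simp only [Pi.mul_apply]
    rw [← Complex.ofReal_mul, ← Complex.ofReal_mul, abs_mul_abs_self]
  have hsqrt : (Matrix.posSemidef_conjTranspose_mul_self X).sqrt = Mabs :=
    (psdEqSqrtAux hMpsd _ hMsq).symm
  have hSX : S * X = Mabs := by
    rw [hSdef, hspec, hmuldiag, hMdef]
    refine congrArg (fun v => U * Matrix.diagonal v * Uᴴ) (funext fun i => ?_)
    simp only [Pi.mul_apply, hs]
    by_cases h : 0 ≤ lam i
    · rw [if_pos h, one_mul, abs_of_nonneg h]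
    · rw [if_neg h, abs_of_neg (lt_of_not_ge h)]
      push_cast
      ring
  exact ⟨S, hSS, by rw [traceNorm, hsqrt, ← hSX]⟩

theorem stmt5 (m n : ℕ) (hm : 2 ≤ m) (hmn : m ≤ n)
    (ρ : Matrix (Fin m × Fin n) (Fin m × Fin n) ℂ) (hρ : IsState ρ) :
    negativity ρ ≤ 1 ∧ traceNorm (ptranspose ρ) ≤ 2 * (m : ℝ) - 1 := by
  obtain ⟨hpsd, htr⟩ := hρ
  have hherm : (ptranspose ρ).IsHermitian := by
    have hρh := hpsd.1
    ext p q
    simpa [ptranspose, Matrix.conjTranspose_apply] using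
      (congrFun (congrFun hρh (q.1, p.2)) (p.1, q.2))
  obtain ⟨S, hSS, hrep⟩ := traceNormRepAux _ hherm
  have h4 := tracePtAux S ρ
  have h5 := traceBoundAux hpsd (fun x => keyBoundAux hSS x)
  have htr' : (Matrix.trace ρ).re = 1 := by rw [htr]; simp
  have hmain : traceNorm (ptranspose ρ) ≤ m := by
    rw [hrep, h4]
    calc (Matrix.trace (ptranspose S * ρ)).re
        ≤ ‖Matrix.trace (ptranspose S * ρ)‖ := by
          exact Complex.re_le_norm _
      _ ≤ m * (Matrix.trace ρ).re := h5
      _ = m := by rw [htr', mul_one]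
  have hm1 : (1 : ℝ) ≤ (m : ℝ) - 1 + 1 := by
    have : (2 : ℝ) ≤ m := by exact_mod_cast hm
    linarith
  constructor
  · rw [negativity, div_le_one]
    · linarith
    · have : (2 : ℝ) ≤ m := by exact_mod_cast hm
      linarith
  · have : (2 : ℝ) ≤ m := by exact_mod_cast hm
    linarith

end
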